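/- If a functor R : E ⥤ F is a local right adjoint, then for any category I the induced functor R_* : E^I ⥤ F^I on diagram categories, given by postcomposition with R, is a local right adjoint. -/

import Mathlib

open CategoryTheory

universe v₁ v₂ v₃ u₁ u₂ u₃

/-- A morphism `g : A ⟶ R.obj X` is `R`-generic if every commutative square
`α ≫ R.map γ = g ≫ R.map β` admits a unique filler `δ : X ⟶ X'` with
`g ≫ R.map δ = α` and `δ ≫ γ = β`. -/
def CategoryTheory.Functor.IsGenericHom {E : Type u₁} {F : Type u₂}
    [Category.{v₁} E] [Category.{v₂} F] (R : E ⥤ F)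
    {A : F} {X : E} (g : A ⟶ R.obj X) : Prop :=
  ∀ {X' Y : E} (α : A ⟶ R.obj X') (β : X ⟶ Y) (γ : X' ⟶ Y),
    α ≫ R.map γ = g ≫ R.map β →
      ∃! δ : X ⟶ X', g ≫ R.map δ = α ∧ δ ≫ γ = β

/-- A functor `R : E ⥤ F` is a local right adjoint if, for every object `X` of `E`,
the induced functor `E/X ⥤ F/R(X)` between slice categories has a left adjoint. -/
def CategoryTheory.Functor.IsLocalRightAdjoint {E : Type u₁} {F : Type u₂}
    [Category.{v₁} E] [Category.{v₂} F] (R : E ⥤ F) : Prop :=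
  ∀ X : E, (Over.post (X := X) R).IsRightAdjoint

section Aux

variable {E : Type u₁} {F : Type u₂} [Category.{v₁} E] [Category.{v₂} F]

/-- From the slice adjunction at `X`, every `f : A ⟶ R.obj X` factors through a "unit"
`g : A ⟶ R.obj B` over `h : B ⟶ X` satisfying a universal property relative to `X`. -/
theorem exists_unit_factorization (R : E ⥤ F) {X : E}
    (hX : (Over.post (X := X) R).IsRightAdjoint) {A : F} (f : A ⟶ R.obj X) :
    ∃ (B : E) (h : B ⟶ X) (g : A ⟶ R.obj B),
      g ≫ R.map h = f ∧
      ∀ {C : E} (c : C ⟶ X) (ψ : A ⟶ R.obj C), ψ ≫ R.map c = f →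
        ∃! δ : B ⟶ C, g ≫ R.map δ = ψ ∧ δ ≫ c = h := by
  letI := hX
  let adj := Adjunction.ofIsRightAdjoint (Over.post (X := X) R)
  set L := (Over.post (X := X) R).leftAdjoint with hL
  refine ⟨(L.obj (Over.mk f)).left, (L.obj (Over.mk f)).hom,
    (adj.unit.app (Over.mk f)).left, ?_, ?_⟩
  · exact Over.w (adj.unit.app (Over.mk f))
  · intro C c ψ hψ
    let m : Over.mk f ⟶ (Over.post (X := X) R).obj (Over.mk c) :=
      Over.homMk ψ (by exact hψ)
    refine ⟨((adj.homEquiv _ _).symm m).left, ⟨?_, ?_⟩, ?_⟩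
    · have h1 : adj.homEquiv (Over.mk f) (Over.mk c) ((adj.homEquiv _ _).symm m) = m :=
        (adj.homEquiv _ _).apply_symm_apply m
      rw [Adjunction.homEquiv_unit] at h1
      have := congrArg CommaMorphism.left h1
      exact this
    · simpa using Over.w ((adj.homEquiv _ _).symm m)
    · intro d' hd'
      let e : L.obj (Over.mk f) ⟶ Over.mk c := Over.homMk d' (by simpa using hd'.2)
      have he : adj.homEquiv (Over.mk f) (Over.mk c) e = m := by
        ext
        rw [Adjunction.homEquiv_unit]
        exact hd'.1
      have : e = (adj.homEquiv _ _).symm m := by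
        apply (adj.homEquiv _ _).injective
        rw [he, (adj.homEquiv _ _).apply_symm_apply]
      exact congrArg CommaMorphism.left this

/-- If `R` is a local right adjoint, every `f : A ⟶ R.obj X` admits a factorization through
a generic morphism which moreover satisfies the slice universal property relative to `X`. -/
theorem exists_generic_factorization (R : E ⥤ F) (hR : R.IsLocalRightAdjoint)
    {A : F} {X : E} (f : A ⟶ R.obj X) :
    ∃ (B : E) (h : B ⟶ X) (g : A ⟶ R.obj B),
      g ≫ R.map h = f ∧ R.IsGenericHom g ∧
      ∀ {C : E} (c : C ⟶ X) (ψ : A ⟶ R.obj C), ψ ≫ R.map c = f →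
        ∃! δ : B ⟶ C, g ≫ R.map δ = ψ ∧ δ ≫ c = h := by
  obtain ⟨B, h, g, comm, UP⟩ := exists_unit_factorization R (hR X) f
  refine ⟨B, h, g, comm, ?_, UP⟩
  intro X' Y α β γ hsq
  obtain ⟨B', h', g', comm', UP'⟩ := exists_unit_factorization R (hR Y) (g ≫ R.map β)
  obtain ⟨p, ⟨hp1, hp2⟩, -⟩ := UP' β g rfl
  obtain ⟨q, ⟨hq1, hq2⟩, hqu⟩ := UP' γ α hsq
  obtain ⟨s, ⟨hs1, hs2⟩, -⟩ := UP (p ≫ h) g'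
    (by rw [R.map_comp, ← Category.assoc, hp1, comm])
  -- s ≫ p = 𝟙 B
  obtain ⟨w, -, hwu⟩ := UP h g comm
  have hsp : s ≫ p = 𝟙 B := by
    have h1 : s ≫ p = w := hwu _ ⟨by rw [R.map_comp, ← Category.assoc, hs1, hp1],
      by rw [Category.assoc]; exact hs2⟩
    have h2 : 𝟙 B = w := hwu _ ⟨by simp, by simp⟩
    rw [h1, h2]
  have hsh' : s ≫ h' = β := by
    rw [← hp2, ← Category.assoc, hsp, Category.id_comp]
  refine ⟨s ≫ q, ⟨by rw [R.map_comp, ← Category.assoc, hs1, hq1],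
    by rw [Category.assoc, hq2, hsh']⟩, ?_⟩
  intro d' hd'
  have hpd' : p ≫ d' = q := hqu _ ⟨by rw [R.map_comp, ← Category.assoc, hp1, hd'.1],
    by rw [Category.assoc, hd'.2, hp2]⟩
  calc d' = (s ≫ p) ≫ d' := by rw [hsp, Category.id_comp]
    _ = s ≫ q := by rw [Category.assoc, hpd']

end Aux

/-- **Statement 4.** If `R : E ⥤ F` is a local right adjoint, then so is the induced
functor `R_* : E^I ⥤ F^I` on diagram categories, given by postcomposition with `R`. -/
theorem isLocalRightAdjoint_whiskeringRight
    {E : Type u₁} {F : Type u₂} [Category.{v₁} E] [Category.{v₂} F]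
    (R : E ⥤ F) (hR : R.IsLocalRightAdjoint)
    (I : Type u₃) [Category.{v₃} I] :
    ((Functor.whiskeringRight I E F).obj R).IsLocalRightAdjoint := by
  intro X
  rw [isRightAdjoint_iff_hasInitial_structuredArrow]
  intro O
  -- pointwise generic factorizations of `O.hom.app i : O.left.obj i ⟶ R.obj (X.obj i)`
  choose B h g comm gen UP using fun i : I =>
    exists_generic_factorization R hR (O.hom.app i)
  -- the naturality squares for `O.hom`
  have fnat : ∀ {i j : I} (u : i ⟶ j),
      O.left.map u ≫ O.hom.app j = O.hom.app i ≫ R.map (X.map u) := by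
    intro i j u
    simpa using O.hom.naturality u
  have sq : ∀ {i j : I} (u : i ⟶ j),
      (O.left.map u ≫ g j) ≫ R.map (h j) = g i ≫ R.map (h i ≫ X.map u) := by
    intro i j u
    rw [Category.assoc, comm j, R.map_comp, ← Category.assoc, comm i]
    exact fnat u
  -- the transition maps between the pointwise generic objects
  have D : ∀ {i j : I} (u : i ⟶ j), ∃! δ : B i ⟶ B j,
      g i ≫ R.map δ = O.left.map u ≫ g j ∧ δ ≫ h j = h i ≫ X.map u :=
    fun {i j} u => gen i (O.left.map u ≫ g j) (h i ≫ X.map u) (h j) (sq u)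
  -- assemble the functor `Bfun : I ⥤ E`
  let Bfun : I ⥤ E :=
    { obj := B
      map := fun u => (D u).choose
      map_id := fun i => ((D (𝟙 i)).choose_spec.2 (𝟙 (B i)) ⟨by simp, by simp⟩).symm
      map_comp := fun {i j k} u v => by
        refine ((D (u ≫ v)).choose_spec.2 ((D u).choose ≫ (D v).choose) ⟨?_, ?_⟩).symm
        · rw [R.map_comp, ← Category.assoc, (D u).choose_spec.1.1, Category.assoc,
            (D v).choose_spec.1.1, ← Category.assoc, ← O.left.map_comp]
        · rw [Category.assoc, (D v).choose_spec.1.2, ← Category.assoc,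
            (D u).choose_spec.1.2, Category.assoc, ← X.map_comp] }
  let hB : Bfun ⟶ X :=
    { app := h
      naturality := fun i j u => (D u).choose_spec.1.2 }
  let gnat : O.left ⟶ Bfun ⋙ R :=
    { app := g
      naturality := fun i j u => ((D u).choose_spec.1.1).symm }
  let Z : Over X := Over.mk hB
  let η : O ⟶ (Over.post (X := X) ((Functor.whiskeringRight I E F).obj R)).obj Z :=
    Over.homMk gnat (by
      ext i
      exact comm i)
  -- componentwise universal property for maps out of the candidate initial object
  have key : ∀ S : StructuredArrow O (Over.post (X := X) ((Functor.whiskeringRight I E F).obj R)),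
      ∀ i : I, ∃! δ : B i ⟶ S.right.left.obj i,
        g i ≫ R.map δ = S.hom.left.app i ∧ δ ≫ S.right.hom.app i = h i := by
    intro S i
    refine UP i (S.right.hom.app i) (S.hom.left.app i) ?_
    have := congrArg (fun (t : O.left ⟶ _) => t.app i) (Over.w S.hom)
    exact this
  refine Limits.IsInitial.hasInitial (X := StructuredArrow.mk η) ?_
  refine Limits.IsInitial.ofUniqueHom (fun S => ?_) (fun S m => ?_)
  · -- existence
    have δnat : ∀ {i j : I} (u : i ⟶ j),
        Bfun.map u ≫ (key S j).choose = (key S i).choose ≫ S.right.left.map u := by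
      intro i j u
      have sq2 : (O.left.map u ≫ S.hom.left.app j) ≫ R.map (S.right.hom.app j)
          = g i ≫ R.map (h i ≫ X.map u) := by
        have hj := congrArg (fun (t : O.left ⟶ _) => t.app j) (Over.w S.hom)
        beta_reduce at hj
        refine (Category.assoc _ _ _).trans ?_
        have : S.hom.left.app j ≫ R.map (S.right.hom.app j) = O.hom.app j := by
          exact hj
        refine (congrArg (O.left.map u ≫ ·) this).trans ?_
        rw [fnat u, ← comm i, R.map_comp, Category.assoc]
      obtain ⟨e, -, heu⟩ := gen i (O.left.map u ≫ S.hom.left.app j)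
        (h i ≫ X.map u) (S.right.hom.app j) sq2
      have h1 : Bfun.map u ≫ (key S j).choose = e := by
        refine heu _ ⟨?_, ?_⟩
        · rw [R.map_comp, ← Category.assoc]
          show (g i ≫ R.map ((D u).choose)) ≫ _ = _
          rw [(D u).choose_spec.1.1, Category.assoc, (key S j).choose_spec.1.1]
        · rw [Category.assoc, (key S j).choose_spec.1.2]
          exact (D u).choose_spec.1.2
      have h2 : (key S i).choose ≫ S.right.left.map u = e := by
        refine heu _ ⟨?_, ?_⟩
        · rw [R.map_comp, ← Category.assoc, (key S i).choose_spec.1.1]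
          have := S.hom.left.naturality u
          exact this.symm
        · have hnat : S.right.left.map u ≫ S.right.hom.app j
              = S.right.hom.app i ≫ X.map u := S.right.hom.naturality u
          rw [Category.assoc, hnat, ← Category.assoc, (key S i).choose_spec.1.2]
      rw [h1, h2]
    let δ : Bfun ⟶ S.right.left :=
      { app := fun i => (key S i).choose
        naturality := fun i j u => δnat u }
    let oδ : Z ⟶ S.right := Over.homMk δ (by
      ext i
      exact (key S i).choose_spec.1.2)
    refine StructuredArrow.homMk oδ ?_
    ext i
    exact (key S i).choose_spec.1.1
  · -- uniqueness
    have comp_eq : ∀ (n : StructuredArrow.mk η ⟶ S) (i : I),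
        n.right.left.app i = (key S i).choose := by
      intro n i
      have hw := congrArg (fun (t : O ⟶ _) => t.left.app i) (StructuredArrow.w n)
      beta_reduce at hw
      have h1 : g i ≫ R.map (n.right.left.app i) = S.hom.left.app i := by
        exact hw
      have hover : n.right.left ≫ S.right.hom = hB := Over.w n.right
      have h2 : n.right.left.app i ≫ S.right.hom.app i = h i :=
        congrArg (fun (t : Bfun ⟶ X) => t.app i) hover
      exact (key S i).choose_spec.2 _ ⟨h1, h2⟩
    apply StructuredArrow.hom_ext
    ext i
    exact (comp_eq m i).trans (comp_eq _ i).symm
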